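/- Fix a prime p and let M be the abelian group of finitely supported functions from ℤ to 𝔽_p = ℤ/p, with standard basis vectors δ_m for m ∈ ℤ. For each n ≥ 1 let V_n : M → M be the 𝔽_p-linear map determined by V_n(δ_m) = n·δ_{n·m} for all m ∈ ℤ. Then there is no finite subset S of M such that the smallest additive subgroup of M containing S and stable under V_n for every n ≥ 1 is all of M. -/
import Mathlib


/-- Combinatorial form of the second half of Corollary 6.6: with
`V_n (δ_m) = n · δ_{n·m}` on `⊕_{m ∈ ℤ} 𝔽_p`, no finite subset generates the
whole group as an additive subgroup stable under all the `V_n`. -/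
theorem stmt_9 (p : ℕ) (hp : p.Prime)
    (V : ℕ+ → (ℤ →₀ ZMod p) →ₗ[ZMod p] (ℤ →₀ ZMod p))
    (hV : ∀ (n : ℕ+) (m : ℤ), V n (Finsupp.single m 1) =
      ((n : ℕ) : ZMod p) • Finsupp.single ((n : ℤ) * m) 1) :
    ¬ ∃ S : Finset (ℤ →₀ ZMod p), ∀ T : AddSubgroup (ℤ →₀ ZMod p),
      (↑S : Set (ℤ →₀ ZMod p)) ⊆ ↑T →
      (∀ (n : ℕ+) (x : ℤ →₀ ZMod p), x ∈ T → V n x ∈ T) →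
      ∀ x : ℤ →₀ ZMod p, x ∈ T := by
  haveI : Fact p.Prime := ⟨hp⟩
  rintro ⟨S, hS⟩
  -- general formula for V n applied to anything
  have hVx : ∀ (n : ℕ+) (x : ℤ →₀ ZMod p),
      V n x = x.sum fun m c => c • (((n : ℕ) : ZMod p) • Finsupp.single ((n : ℤ) * m) 1) := by
    intro n x
    conv_lhs => rw [← Finsupp.sum_single x]
    rw [map_finsuppSum]
    refine Finsupp.sum_congr fun m _ => ?_
    rw [← Finsupp.smul_single_one m (x m), map_smul, hV]
  -- bound on supports of S
  set N : ℕ := S.sup fun s => s.support.sup fun m => m.natAbs with hN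
  set K : ℕ := N + 1 with hK
  have hpK : (N : ℤ) < (p : ℤ) ^ K := by
    have := Nat.lt_pow_self hp.one_lt (n := K)
    have hNK : N < K := Nat.lt_succ_self N
    exact_mod_cast lt_of_le_of_lt (Nat.le_of_lt hNK) this
  -- the obstruction subgroup
  set T : AddSubgroup (ℤ →₀ ZMod p) :=
    { carrier := {x | ∀ m : ℤ, m ≠ 0 → (p : ℤ) ^ K ∣ m → x m = 0}
      zero_mem' := fun m _ _ => rfl
      add_mem' := by
        intro a b ha hb m hm hd
        simp [ha m hm hd, hb m hm hd]
      neg_mem' := by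
        intro a ha m hm hd
        simp [ha m hm hd] } with hT
  have hST : (↑S : Set (ℤ →₀ ZMod p)) ⊆ ↑T := by
    intro s hs m hm hd
    by_contra hne
    have hmem : m ∈ s.support := Finsupp.mem_support_iff.mpr hne
    have h1 : m.natAbs ≤ N :=
      le_trans (Finset.le_sup (f := fun m : ℤ => m.natAbs) hmem)
        (Finset.le_sup (f := fun s : ℤ →₀ ZMod p => s.support.sup fun m => m.natAbs) hs)
    have h2 : (p : ℤ) ^ K ≤ |m| := Int.le_of_dvd (abs_pos.mpr hm) ((dvd_abs _ _).mpr hd)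
    have h3 : |m| ≤ (N : ℤ) := by
      rwa [Int.abs_eq_natAbs, Int.ofNat_le]
    omega
  have hVT : ∀ (n : ℕ+) (x : ℤ →₀ ZMod p), x ∈ T → V n x ∈ T := by
    intro n x hx m0 hm0 hd
    have hxmem : ∀ m : ℤ, m ≠ 0 → (p : ℤ) ^ K ∣ m → x m = 0 := hx
    rw [hVx]
    rw [Finsupp.sum_apply]
    apply Finset.sum_eq_zero
    intro m _
    simp only [Finsupp.smul_apply, Finsupp.single_apply, smul_eq_mul]
    by_cases hem : (n : ℤ) * m = m0
    · by_cases hpn : p ∣ (n : ℕ)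
      · have : ((n : ℕ) : ZMod p) = 0 := (ZMod.natCast_eq_zero_iff _ _).mpr hpn
        simp [this]
      · -- p^K divides m, so x m = 0
        have hcopn : Nat.Coprime (p ^ K) (n : ℕ) := (hp.coprime_iff_not_dvd.mpr hpn).pow_left K
        have hcop : IsCoprime ((p : ℤ) ^ K) ((n : ℕ) : ℤ) := by
          rw [← Nat.cast_pow]
          exact Int.isCoprime_iff_gcd_eq_one.mpr hcopn
        have hdm : (p : ℤ) ^ K ∣ m := by
          refine hcop.dvd_of_dvd_mul_left ?_
          rw [hem]; exact hd
        have hmne : m ≠ 0 := by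
          rintro rfl
          simp at hem
          exact hm0 hem.symm
        simp [hxmem m hmne hdm]
    · simp [hem]
  have := hS T hST hVT (Finsupp.single ((p : ℤ) ^ K) 1)
  have hKne : ((p : ℤ) ^ K) ≠ 0 := by have := hp.pos; positivity
  have := this ((p : ℤ) ^ K) hKne dvd_rfl
  rw [Finsupp.single_apply] at this
  simp at this
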